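/- arXiv:1503.08233 — 6 statements merged into one kernel-verified Lean document; each statement's English description precedes it below -/
import Mathlib

section
/- Let v₀ > 0, let u : ℝ² → ℝ² be a twice continuously differentiable divergence-free vector field, and let (r*, θ*) be an equilibrium of the front-element dynamics. Let μ ∈ ℝ be the number satisfying Du(r*) ĝ(θ*) = μ ĝ(θ*) (ĝ(θ*) is an eigenvector of Du(r*) at any equilibrium), assume μ ≠ 0, and set a·g := Σ_{i,j,k} n̂ᵢ(θ*) ĝⱼ(θ*) ĝₖ(θ*) ∂ⱼ∂ₖuᵢ(r*) and μ' := (2μ² − v₀ (a·g))/μ. Then the characteristic polynomial of the Jacobian matrix at (r*, θ*) of the three-dimensional vector field F(r, θ) = (u(r) + v₀ n̂(θ), −n̂(θ)·(Du(r) ĝ(θ))) equals λ ↦ (λ + μ)(λ² + μλ − μμ'); equivalently its eigenvalues are λ₀ = −μ and λ± = (1/2)(−μ ± √(μ² + 4μμ')). -/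
noncomputable section

open Real Polynomial

/-- Points in the plane, with the Euclidean norm. -/
abbrev Pt : Type := EuclideanSpace ℝ (Fin 2)

/-- Build a point of the plane from two coordinates. -/
def vec2 (a b : ℝ) : Pt := (WithLp.equiv 2 (Fin 2 → ℝ)).symm ![a, b]

/-- Front tangent direction ĝ(θ) = (cos θ, sin θ). -/
def ghat (θ : ℝ) : Pt := vec2 (Real.cos θ) (Real.sin θ)

/-- Front normal (burning) direction n̂(θ) = (sin θ, −cos θ). -/
def nhat (θ : ℝ) : Pt := vec2 (Real.sin θ) (-(Real.cos θ))

/-- Euclidean dot product on the plane. -/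
def dot (v w : Pt) : ℝ := v 0 * w 0 + v 1 * w 1

/-- The Jacobian matrix Du(r) of a planar vector field. -/
def jacOf (u : Pt → Pt) (r : Pt) : Matrix (Fin 2) (Fin 2) ℝ :=
  fun i j => fderiv ℝ u r (EuclideanSpace.single j 1) i

/-- Action of a 2×2 matrix on a point of the plane. -/
def mulVec2 (M : Matrix (Fin 2) (Fin 2) ℝ) (v : Pt) : Pt :=
  vec2 (M 0 0 * v 0 + M 0 1 * v 1) (M 1 0 * v 0 + M 1 1 * v 1)

/-- The three-dimensional front-element vector field
    F(r, θ) = (u(r) + v₀ n̂(θ), −n̂(θ)·(Du(r) ĝ(θ))). -/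
def frontField (v₀ : ℝ) (u : Pt → Pt) (q : Pt × ℝ) : Pt × ℝ :=
  (u q.1 + v₀ • nhat q.2, -(dot (nhat q.2) (mulVec2 (jacOf u q.1) (ghat q.2))))

/-- The standard basis of ℝ² × ℝ ≃ ℝ³. -/
def basis3 : Fin 3 → Pt × ℝ :=
  ![(EuclideanSpace.single 0 1, 0), (EuclideanSpace.single 1 1, 0), ((0 : Pt), 1)]

/-- Components of a vector in ℝ² × ℝ ≃ ℝ³. -/
def comp3 (p : Pt × ℝ) : Fin 3 → ℝ := ![p.1 0, p.1 1, p.2]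

/-- The 3×3 Jacobian matrix of the front-element field at a point of ℝ² × ℝ. -/
def jac3 (v₀ : ℝ) (u : Pt → Pt) (q : Pt × ℝ) : Matrix (Fin 3) (Fin 3) ℝ :=
  fun i j => comp3 (fderiv ℝ (frontField v₀ u) q (basis3 j)) i

/-- Second partial derivative ∂ⱼ∂ₖuᵢ(r). -/
def d2 (u : Pt → Pt) (r : Pt) (i j k : Fin 2) : ℝ :=
  fderiv ℝ (fun x => fderiv ℝ u x (EuclideanSpace.single k 1) i) r (EuclideanSpace.single j 1)

/-- Divergence-free: ∂₁u₁ + ∂₂u₂ = 0 everywhere. -/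
def divFree (u : Pt → Pt) : Prop := ∀ r : Pt, jacOf u r 0 0 + jacOf u r 1 1 = 0

/-- Rotation of a planar vector by +π/2. -/
def perp (v : Pt) : Pt := vec2 (-(v 1)) (v 0)

/-- The velocity field generated by a stream function: u = (∂Ψ/∂y, −∂Ψ/∂x). -/
def uOf (Ψ : Pt → ℝ) (x : Pt) : Pt :=
  vec2 (fderiv ℝ Ψ x (EuclideanSpace.single 1 1)) (-(fderiv ℝ Ψ x (EuclideanSpace.single 0 1)))

/-- Polar angle of a point of the plane. -/
def angOf (x : Pt) : ℝ := Complex.arg ⟨x 0, x 1⟩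


-- Auxiliary lemmas
@[simp] lemma vec2_apply_zero (a b : ℝ) : vec2 a b 0 = a := rfl
@[simp] lemma vec2_apply_one (a b : ℝ) : vec2 a b 1 = b := rfl

lemma cp3 (M : Matrix (Fin 3) (Fin 3) ℝ) : M.charpoly =
    X^3 - C (M 0 0 + M 1 1 + M 2 2) * X^2
    + C (M 0 0 * M 1 1 - M 0 1 * M 1 0 + M 0 0 * M 2 2 - M 0 2 * M 2 0
        + M 1 1 * M 2 2 - M 1 2 * M 2 1) * X
    - C (M 0 0 * (M 1 1 * M 2 2 - M 1 2 * M 2 1)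
        - M 0 1 * (M 1 0 * M 2 2 - M 1 2 * M 2 0)
        + M 0 2 * (M 1 0 * M 2 1 - M 1 1 * M 2 0)) := by
  rw [Matrix.charpoly, Matrix.det_fin_three]
  simp only [Matrix.charmatrix_apply, Matrix.diagonal_apply, Matrix.map_apply, Matrix.sub_apply,
    Matrix.smul_apply, Matrix.one_apply, Fin.ext_iff]
  norm_num
  try simp only [map_mul, map_add, map_sub, map_neg]
  ring

lemma hasDerivAt_nhat (θ : ℝ) : HasDerivAt nhat (ghat θ) θ := by
  have h : HasDerivAt (fun t => (![Real.sin t, -(Real.cos t)] : Fin 2 → ℝ))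
      (![Real.cos θ, Real.sin θ]) θ := by
    rw [hasDerivAt_pi]
    intro i
    fin_cases i
    · simpa using Real.hasDerivAt_sin θ
    · convert (Real.hasDerivAt_cos θ).neg using 1 <;> first | (funext t; simp) | simp
  exact ((EuclideanSpace.equiv (Fin 2) ℝ).symm.hasFDerivAt.comp_hasDerivAt θ h)

lemma diff_phi {u : Pt → Pt} (hu : ContDiff ℝ 2 u) (i k : Fin 2) (x : Pt) :
    DifferentiableAt ℝ (fun x => fderiv ℝ u x (EuclideanSpace.single k 1) i) x := by
  have h1 : Differentiable ℝ (fderiv ℝ u) :=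
    (hu.fderiv_right (m := 1) le_rfl).differentiable one_ne_zero
  have h2 : Differentiable ℝ (fun x => fderiv ℝ u x (EuclideanSpace.single k 1)) :=
    h1.clm_apply (differentiable_const _)
  exact ((EuclideanSpace.proj i (𝕜 := ℝ)).hasFDerivAt.comp x (h2 x).hasFDerivAt).differentiableAt

set_option maxHeartbeats 2000000 in
/-- For a C² divergence-free flow and a burning fixed point (r*, θ*)
with Du(r*) ĝ(θ*) = μ ĝ(θ*), μ ≠ 0, setting a·g = Σ n̂ᵢĝⱼĝₖ ∂ⱼ∂ₖuᵢ(r*) and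
μ' = (2μ² − v₀ a·g)/μ, the characteristic polynomial of the Jacobian of the
front-element field at (r*, θ*) is (λ + μ)(λ² + μλ − μμ'). -/
theorem charpoly_of_front_jacobian
    (v₀ : ℝ) (hv₀ : 0 < v₀) (u : Pt → Pt) (hu : ContDiff ℝ 2 u) (hdiv : divFree u)
    (rs : Pt) (θs : ℝ) (heq : frontField v₀ u (rs, θs) = 0)
    (μ : ℝ) (hμ0 : μ ≠ 0) (hμ : mulVec2 (jacOf u rs) (ghat θs) = μ • ghat θs)
    (ag μ' : ℝ)
    (hag : ag = ∑ i : Fin 2, ∑ j : Fin 2, ∑ k : Fin 2,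
      nhat θs i * ghat θs j * ghat θs k * d2 u rs i j k)
    (hμ' : μ' = (2 * μ ^ 2 - v₀ * ag) / μ) :
    (jac3 v₀ u (rs, θs)).charpoly =
      (X + C μ) * (X ^ 2 + C μ * X - C (μ * μ')) := by
  -- abbreviations (plain defs via set)
  set c := Real.cos θs with hc
  set s := Real.sin θs with hs
  -- the two eigen equations, trace, pythagoras
  have h1 : jacOf u rs 0 0 * c + jacOf u rs 0 1 * s = μ * c := by
    have := congrArg (fun v : Pt => v 0) hμ
    simpa [mulVec2, ghat] using this
  have h2 : jacOf u rs 1 0 * c + jacOf u rs 1 1 * s = μ * s := by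
    have := congrArg (fun v : Pt => v 1) hμ
    simpa [mulVec2, ghat] using this
  have htr : jacOf u rs 0 0 + jacOf u rs 1 1 = 0 := hdiv rs
  have hpy : c ^ 2 + s ^ 2 = 1 := by
    rw [hc, hs]; exact Real.cos_sq_add_sin_sq θs
  have hμμ' : μ * μ' = 2 * μ ^ 2 - v₀ * ag := by
    rw [hμ']; field_simp
  have hagx : ag = s * (c * (c * d2 u rs 0 0 0 + s * d2 u rs 0 0 1)
        + s * (c * d2 u rs 0 1 0 + s * d2 u rs 0 1 1))
      - c * (c * (c * d2 u rs 1 0 0 + s * d2 u rs 1 0 1)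
        + s * (c * d2 u rs 1 1 0 + s * d2 u rs 1 1 1)) := by
    rw [hag, Fin.sum_univ_two, Fin.sum_univ_two]
    simp only [Fin.sum_univ_two, nhat, ghat, vec2_apply_zero, vec2_apply_one]
    ring
  -- the derivative of the front field
  have hdphi := fun (i k : Fin 2) => diff_phi hu i k rs
  have hφf : ∀ i k : Fin 2, HasFDerivAt
      (fun q : Pt × ℝ => fderiv ℝ u q.1 (EuclideanSpace.single k 1) i)
      ((fderiv ℝ (fun x => fderiv ℝ u x (EuclideanSpace.single k 1) i) rs).comp
        (ContinuousLinearMap.fst ℝ Pt ℝ)) (rs, θs) :=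
    fun i k => HasFDerivAt.comp (g := fun x => fderiv ℝ u x (EuclideanSpace.single k 1) i)
      (f := Prod.fst) (rs, θs) (hdphi i k).hasFDerivAt (hasFDerivAt_fst (𝕜 := ℝ) (p := (rs, θs)))
  have hsinq : HasFDerivAt (fun q : Pt × ℝ => Real.sin q.2)
      ((ContinuousLinearMap.smulRight (1 : ℝ →L[ℝ] ℝ) c).comp (ContinuousLinearMap.snd ℝ Pt ℝ))
      (rs, θs) :=
    HasFDerivAt.comp (g := Real.sin) (f := (Prod.snd : Pt × ℝ → ℝ)) (rs, θs)
      ((Real.hasDerivAt_sin θs).hasFDerivAt) (hasFDerivAt_snd (𝕜 := ℝ) (p := (rs, θs)))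
  have hcosq : HasFDerivAt (fun q : Pt × ℝ => Real.cos q.2)
      ((ContinuousLinearMap.smulRight (1 : ℝ →L[ℝ] ℝ) (-s)).comp (ContinuousLinearMap.snd ℝ Pt ℝ))
      (rs, θs) :=
    HasFDerivAt.comp (g := Real.cos) (f := (Prod.snd : Pt × ℝ → ℝ)) (rs, θs)
      ((Real.hasDerivAt_cos θs).hasFDerivAt) (hasFDerivAt_snd (𝕜 := ℝ) (p := (rs, θs)))
  have hu1 : HasFDerivAt (fun q : Pt × ℝ => u q.1)
      ((fderiv ℝ u rs).comp (ContinuousLinearMap.fst ℝ Pt ℝ)) (rs, θs) :=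
    HasFDerivAt.comp (g := u) (f := (Prod.fst : Pt × ℝ → Pt)) (rs, θs)
      ((hu.differentiable two_ne_zero) rs).hasFDerivAt (hasFDerivAt_fst (𝕜 := ℝ) (p := (rs, θs)))
  have hn2 : HasFDerivAt (fun q : Pt × ℝ => v₀ • nhat q.2)
      (v₀ • ((ContinuousLinearMap.smulRight (1 : ℝ →L[ℝ] ℝ) (ghat θs)).comp
        (ContinuousLinearMap.snd ℝ Pt ℝ))) (rs, θs) :=
    (HasFDerivAt.comp (g := nhat) (f := (Prod.snd : Pt × ℝ → ℝ)) (rs, θs)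
      ((hasDerivAt_nhat θs).hasFDerivAt) (hasFDerivAt_snd (𝕜 := ℝ) (p := (rs, θs)))).const_smul v₀
  have hF1 := hu1.fun_add hn2
  have hG := ((hsinq.fun_mul (((hφf 0 0).fun_mul hcosq).fun_add ((hφf 0 1).fun_mul hsinq))).fun_add
    ((hcosq.fun_neg).fun_mul (((hφf 1 0).fun_mul hcosq).fun_add ((hφf 1 1).fun_mul hsinq)))).fun_neg
  have hF := HasFDerivAt.prodMk hF1 hG
  have hFF : frontField v₀ u = fun q : Pt × ℝ =>
      (u q.1 + v₀ • nhat q.2,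
       -(Real.sin q.2 * (fderiv ℝ u q.1 (EuclideanSpace.single 0 1) 0 * Real.cos q.2
            + fderiv ℝ u q.1 (EuclideanSpace.single 1 1) 0 * Real.sin q.2)
         + (-(Real.cos q.2)) * (fderiv ℝ u q.1 (EuclideanSpace.single 0 1) 1 * Real.cos q.2
            + fderiv ℝ u q.1 (EuclideanSpace.single 1 1) 1 * Real.sin q.2))) := rfl
  have hfd := hF.fderiv
  -- the Jacobian matrix
  have hM : jac3 v₀ u (rs, θs) =
      !![jacOf u rs 0 0, jacOf u rs 0 1, v₀ * c;
         jacOf u rs 1 0, jacOf u rs 1 1, v₀ * s;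
         -(s * (c * d2 u rs 0 0 0 + s * d2 u rs 0 0 1)
            - c * (c * d2 u rs 1 0 0 + s * d2 u rs 1 0 1)),
         -(s * (c * d2 u rs 0 1 0 + s * d2 u rs 0 1 1)
            - c * (c * d2 u rs 1 1 0 + s * d2 u rs 1 1 1)),
         -(s * (jacOf u rs 0 1 * c - jacOf u rs 0 0 * s)
            + (jacOf u rs 0 0 * c + jacOf u rs 0 1 * s) * c
            - c * (jacOf u rs 1 1 * c - jacOf u rs 1 0 * s)
            + (jacOf u rs 1 0 * c + jacOf u rs 1 1 * s) * s)] := by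
    ext i j
    fin_cases i <;> fin_cases j <;>
      (simp only [jac3]; rw [hFF, hfd]; simp [comp3, basis3, jacOf, d2, ghat,
        ContinuousLinearMap.prod_apply, ContinuousLinearMap.comp_apply,
        ContinuousLinearMap.add_apply, ContinuousLinearMap.smul_apply,
        ContinuousLinearMap.coe_fst', ContinuousLinearMap.coe_snd',
        ContinuousLinearMap.smulRight_apply, ContinuousLinearMap.one_apply,
        ContinuousLinearMap.neg_apply, Pi.smul_apply, smul_eq_mul]; try ring; try exact Or.inl rfl)
  rw [hM, cp3]
  simp only [Matrix.cons_val', Matrix.cons_val_zero, Matrix.cons_val_one, Matrix.head_cons,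
    Matrix.empty_val', Matrix.cons_val_fin_one, Matrix.head_fin_const, Matrix.of_apply,
    Matrix.cons_val_two, Matrix.tail_cons]
  -- real-number identities for the three coefficients
  have hgAg : c * (jacOf u rs 0 0 * c + jacOf u rs 0 1 * s)
      + s * (jacOf u rs 1 0 * c + jacOf u rs 1 1 * s) = μ := by
    linear_combination c * h1 + s * h2 + μ * hpy
  have hnAn : s * (jacOf u rs 0 0 * s - jacOf u rs 0 1 * c)
      - c * (jacOf u rs 1 0 * s - jacOf u rs 1 1 * c) = -μ := by
    linear_combination (-c) * h1 + (-s) * h2 + (c^2 + s^2) * htr + (-μ) * hpy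
  have hdetA : jacOf u rs 0 0 * jacOf u rs 1 1 - jacOf u rs 0 1 * jacOf u rs 1 0 = -μ^2 := by
    linear_combination (c * jacOf u rs 1 1 - c * μ - s * jacOf u rs 1 0) * h1
      + (s * jacOf u rs 0 0 - s * μ - c * jacOf u rs 0 1) * h2
      + (μ * c^2 + μ * s^2) * htr
      + (-(jacOf u rs 0 0 * jacOf u rs 1 1 - jacOf u rs 0 1 * jacOf u rs 1 0 + μ^2)) * hpy
  have ht : -(s * (jacOf u rs 0 1 * c - jacOf u rs 0 0 * s)
      + (jacOf u rs 0 0 * c + jacOf u rs 0 1 * s) * c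
      - c * (jacOf u rs 1 1 * c - jacOf u rs 1 0 * s)
      + (jacOf u rs 1 0 * c + jacOf u rs 1 1 * s) * s) = -(2*μ) := by
    linear_combination hnAn - hgAg
  have hb : c * (-(s * (c * d2 u rs 0 0 0 + s * d2 u rs 0 0 1)
        - c * (c * d2 u rs 1 0 0 + s * d2 u rs 1 0 1)))
      + s * (-(s * (c * d2 u rs 0 1 0 + s * d2 u rs 0 1 1)
        - c * (c * d2 u rs 1 1 0 + s * d2 u rs 1 1 1))) = -ag := by
    linear_combination hagx
  have k1 : c * jacOf u rs 1 0 - s * jacOf u rs 0 0 = μ * s := by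
    linear_combination h2 - s * htr
  have k2 : s * jacOf u rs 0 1 - c * jacOf u rs 1 1 = μ * c := by
    linear_combination h1 - c * htr
  set A00 := jacOf u rs 0 0
  set A01 := jacOf u rs 0 1
  set A10 := jacOf u rs 1 0
  set A11 := jacOf u rs 1 1
  set b0 := -(s * (c * d2 u rs 0 0 0 + s * d2 u rs 0 0 1)
        - c * (c * d2 u rs 1 0 0 + s * d2 u rs 1 0 1)) with hb0
  set b1 := -(s * (c * d2 u rs 0 1 0 + s * d2 u rs 0 1 1)
        - c * (c * d2 u rs 1 1 0 + s * d2 u rs 1 1 1)) with hb1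
  set t := -(s * (A01 * c - A00 * s) + (A00 * c + A01 * s) * c
      - c * (A11 * c - A10 * s) + (A10 * c + A11 * s) * s) with htdef
  have E2 : A00 + A11 + t = -(2*μ) := by linear_combination htr + ht
  have E1 : A00 * A11 - A01 * A10 + A00 * t - v₀ * c * b0 + A11 * t - v₀ * s * b1
      = μ^2 - μ*μ' := by
    linear_combination hdetA + (A00 + A11) * ht - (2*μ) * htr - v₀ * hb + hμμ'
  have E0 : A00 * (A11 * t - v₀ * s * b1) - A01 * (A10 * t - v₀ * s * b0)
      + v₀ * c * (A10 * b1 - A11 * b0) = μ^2 * μ' := by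
    linear_combination (A00 * A11 - A01 * A10) * ht + (-(2*μ)) * hdetA
      + v₀ * b1 * k1 + v₀ * b0 * k2 + v₀ * μ * hb + (-μ) * hμμ'
  rw [E2, E1, E0]
  simp only [map_mul, map_add, map_sub, map_neg, map_pow, map_ofNat]
  ring
end
end

section
/- Let v₀ > 0 and u : ℝ² → ℝ², and let (r, θ) be a sliding point with |u(r)| > v₀. Write u = u(r), u⊥ for the rotation of u by +π/2 (i.e. (u₁,u₂)⊥ = (−u₂, u₁)), and ε = sgn((u + v₀ n̂(θ)) · ĝ(θ)) ∈ {+1, −1}. Then the front-element velocity satisfies u + v₀ n̂(θ) = [1 − (v₀/|u|)²] u − ε (v₀/|u|) √(1 − (v₀/|u|)²) u⊥; that is, ṙ equals the vector field w₊ on the branch where ṙ · ĝ > 0 and w₋ on the branch where ṙ · ĝ < 0, with w± = [1 − (v₀/|u|)²] u ∓ (v₀/|u|)√(1 − (v₀/|u|)²) u⊥. -/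
noncomputable section

open Real Polynomial

set_option maxHeartbeats 1000000


/-- On the fast zone, the velocity of a sliding front element equals
the branch field w± = [1 − (v₀/|u|)²] u ∓ (v₀/|u|)√(1 − (v₀/|u|)²) u⊥, with the
sign ε = sgn(ṙ·ĝ) selecting the branch. -/
theorem sliding_branch_fields
    (v₀ : ℝ) (hv₀ : 0 < v₀) (u : Pt → Pt) (r : Pt) (θ : ℝ)
    (hs : dot (u r + v₀ • nhat θ) (nhat θ) = 0) (hfast : v₀ < ‖u r‖) :
    u r + v₀ • nhat θ =
      (1 - (v₀ / ‖u r‖) ^ 2) • u r -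
        (Real.sign (dot (u r + v₀ • nhat θ) (ghat θ)) * (v₀ / ‖u r‖) *
          Real.sqrt (1 - (v₀ / ‖u r‖) ^ 2)) • perp (u r) := by
  have hcs : Real.cos θ ^ 2 + Real.sin θ ^ 2 = 1 := by
    have := Real.sin_sq_add_cos_sq θ; linarith
  set a := u r 0 with ha
  set b := u r 1 with hb
  set c := Real.cos θ with hc
  set s := Real.sin θ with hsn
  have hN : (0:ℝ) < ‖u r‖ := lt_trans hv₀ hfast
  have hNne : ‖u r‖ ≠ 0 := ne_of_gt hN
  have hN2 : ‖u r‖ ^ 2 = a ^ 2 + b ^ 2 := by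
    rw [EuclideanSpace.norm_eq]
    rw [Real.sq_sqrt (by positivity)]
    simp [Fin.sum_univ_two, sq_abs, ← ha, ← hb]
  have hslide : a * s - b * c = -v₀ := by
    simp only [dot, nhat, ghat, vec2, PiLp.add_apply, PiLp.smul_apply,
      WithLp.equiv_symm_apply, PiLp.toLp_apply, Matrix.cons_val_zero, Matrix.cons_val_one,
      Matrix.head_cons, smul_eq_mul, ← ha, ← hb, ← hc, ← hsn] at hs
    nlinarith [hcs]
  set t := dot (u r + v₀ • nhat θ) (ghat θ) with hts
  have ht : t = a * c + b * s := by
    simp only [hts, dot, nhat, ghat, vec2, PiLp.add_apply, PiLp.smul_apply,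
      WithLp.equiv_symm_apply, PiLp.toLp_apply, Matrix.cons_val_zero, Matrix.cons_val_one,
      Matrix.head_cons, smul_eq_mul, ← ha, ← hb, ← hc, ← hsn]
    ring
  have ht2 : t ^ 2 = ‖u r‖ ^ 2 - v₀ ^ 2 := by
    rw [ht, hN2]; nlinarith [hcs, hslide]
  have htpos : 0 < t ^ 2 := by nlinarith
  have htne : t ≠ 0 := by intro h; rw [h] at htpos; simp at htpos
  have hsub : 1 - (v₀ / ‖u r‖) ^ 2 = (t / ‖u r‖) ^ 2 := by
    field_simp
    nlinarith [ht2]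
  have hsqrt : Real.sqrt (1 - (v₀ / ‖u r‖) ^ 2) = |t| / ‖u r‖ := by
    rw [hsub, Real.sqrt_sq_eq_abs, abs_div, abs_of_pos hN]
  have hsign : Real.sign t * |t| = t := by
    rcases lt_or_gt_of_ne htne with h | h
    · rw [Real.sign_of_neg h, abs_of_neg h]; ring
    · rw [Real.sign_of_pos h, abs_of_pos h]; ring
  have hcoef : Real.sign t * (v₀ / ‖u r‖) * Real.sqrt (1 - (v₀ / ‖u r‖) ^ 2)
      = v₀ * t / ‖u r‖ ^ 2 := by
    rw [hsqrt]
    field_simp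
    linear_combination hsign
  rw [hcoef, hsub]
  have key0 : a + v₀ * s = (t / ‖u r‖) ^ 2 * a - v₀ * t / ‖u r‖ ^ 2 * (-b) := by
    field_simp
    linear_combination (a + v₀*s) * hN2 + (a*(a*s - b*c)) * hslide
      - a*(a^2 + b^2) * hcs - (a*(t + a*c + b*s) + v₀*b) * ht
  have key1 : b + v₀ * -c = (t / ‖u r‖) ^ 2 * b - v₀ * t / ‖u r‖ ^ 2 * a := by
    field_simp
    linear_combination (b - v₀*c) * hN2 + (b*(a*s - b*c)) * hslide
      - b*(a^2 + b^2) * hcs - (b*(t + a*c + b*s) - v₀*a) * ht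
  ext i
  fin_cases i
  · simpa only [perp, vec2, nhat, PiLp.add_apply, PiLp.sub_apply, PiLp.smul_apply,
      WithLp.equiv_symm_apply, PiLp.toLp_apply, Matrix.cons_val_zero, Matrix.cons_val_one,
      Fin.mk_zero, Fin.mk_one, Matrix.head_cons, smul_eq_mul, ← ha, ← hb, ← hc, ← hsn] using key0
  · simpa only [perp, vec2, nhat, PiLp.add_apply, PiLp.sub_apply, PiLp.smul_apply,
      WithLp.equiv_symm_apply, PiLp.toLp_apply, Matrix.cons_val_zero, Matrix.cons_val_one,
      Fin.mk_zero, Fin.mk_one, Matrix.head_cons, smul_eq_mul, ← ha, ← hb, ← hc, ← hsn] using key1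
end
end

section
/- Let v₀ > 0, let u : ℝ² → ℝ² be continuously differentiable, and let (r, θ) : I → ℝ² × ℝ be a differentiable solution of the front-element dynamics on an open interval I. Then the function φ(t) := ṙ(t) · n̂(θ(t)) = (u(r(t)) + v₀ n̂(θ(t))) · n̂(θ(t)) is differentiable and satisfies, for all t ∈ I, φ'(t) = φ(t) · (n̂(θ(t)) · (Du(r(t)) n̂(θ(t)))). -/
noncomputable section

open Real Polynomial

/-- Along a solution of the front-element dynamics, the quantity
φ(t) = ṙ(t)·n̂(θ(t)) is differentiable with φ'(t) = φ(t) (n̂·(Du n̂)). -/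
theorem sliding_defect_evolution
    (v₀ : ℝ) (hv₀ : 0 < v₀) (u : Pt → Pt) (hu : ContDiff ℝ 1 u)
    (a b : ℝ) (r : ℝ → Pt) (θ : ℝ → ℝ)
    (hr : ∀ t ∈ Set.Ioo a b, HasDerivAt r (u (r t) + v₀ • nhat (θ t)) t)
    (hθ : ∀ t ∈ Set.Ioo a b,
      HasDerivAt θ (-(dot (nhat (θ t)) (mulVec2 (jacOf u (r t)) (ghat (θ t))))) t) :
    ∀ t ∈ Set.Ioo a b,
      HasDerivAt (fun s => dot (u (r s) + v₀ • nhat (θ s)) (nhat (θ s)))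
        (dot (u (r t) + v₀ • nhat (θ t)) (nhat (θ t)) *
          dot (nhat (θ t)) (mulVec2 (jacOf u (r t)) (nhat (θ t)))) t := by
  intro t ht
  have hrt := hr t ht
  have hθt := hθ t ht
  set Θ := θ t with hΘ
  set v : Pt := u (r t) + v₀ • nhat Θ with hv
  set θ' : ℝ := -(dot (nhat Θ) (mulVec2 (jacOf u (r t)) (ghat Θ))) with hθ'
  set M := jacOf u (r t) with hM
  have hdu : HasFDerivAt u (fderiv ℝ u (r t)) (r t) :=
    (hu.differentiable one_ne_zero (r t)).hasFDerivAt
  have hur : HasDerivAt (fun s => u (r s)) (fderiv ℝ u (r t) v) t :=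
    hdu.comp_hasDerivAt t hrt
  -- components of u ∘ r
  have hvdec : v = v 0 • EuclideanSpace.single 0 1 + v 1 • EuclideanSpace.single 1 1 := by
    ext i; fin_cases i <;> simp [EuclideanSpace.single_apply]
  have hcomp : ∀ i : Fin 2, fderiv ℝ u (r t) v i = M i 0 * v 0 + M i 1 * v 1 := by
    intro i
    conv_lhs => rw [hvdec]
    rw [map_add, map_smul, map_smul]
    simp [hM, jacOf, mul_comm]
  have hU : ∀ i : Fin 2, HasDerivAt (fun s => u (r s) i) (M i 0 * v 0 + M i 1 * v 1) t := by
    intro i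
    have := (EuclideanSpace.proj (𝕜 := ℝ) i).hasFDerivAt.comp_hasDerivAt t hur
    simp [hcomp i] at this; exact this
  have hS : HasDerivAt (fun s => Real.sin (θ s)) (Real.cos Θ * θ') t :=
    (Real.hasDerivAt_sin Θ).comp t hθt
  have hC : HasDerivAt (fun s => Real.cos (θ s)) (-Real.sin Θ * θ') t :=
    (Real.hasDerivAt_cos Θ).comp t hθt
  -- the function in coordinates
  have hfun : (fun s => dot (u (r s) + v₀ • nhat (θ s)) (nhat (θ s)))
      = fun s => (u (r s) 0 + v₀ * Real.sin (θ s)) * Real.sin (θ s)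
        + (u (r s) 1 + v₀ * (-Real.cos (θ s))) * (-Real.cos (θ s)) := by
    funext s; simp [dot, nhat, vec2]
  have key : HasDerivAt
      (fun s => (u (r s) 0 + v₀ * Real.sin (θ s)) * Real.sin (θ s)
        + (u (r s) 1 + v₀ * (-Real.cos (θ s))) * (-Real.cos (θ s)))
      (((M 0 0 * v 0 + M 0 1 * v 1) + v₀ * (Real.cos Θ * θ')) * Real.sin Θ
        + (u (r t) 0 + v₀ * Real.sin Θ) * (Real.cos Θ * θ')
        + ((((M 1 0 * v 0 + M 1 1 * v 1) + v₀ * (-(-Real.sin Θ * θ'))) * (-Real.cos Θ))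
          + (u (r t) 1 + v₀ * (-Real.cos Θ)) * (-(-Real.sin Θ * θ')))) t := by
    exact (((hU 0).add (hS.const_mul v₀)).mul hS).add
      (((hU 1).add ((hC.neg).const_mul v₀)).mul hC.neg)
  rw [hfun]
  convert key using 1
  have hv0 : v 0 = u (r t) 0 + v₀ * Real.sin Θ := by simp [hv, nhat, vec2]
  have hv1 : v 1 = u (r t) 1 + v₀ * (-Real.cos Θ) := by simp [hv, nhat, vec2]
  have hθ'e : θ' = -((Real.sin Θ) * (M 0 0 * Real.cos Θ + M 0 1 * Real.sin Θ)
      + (-Real.cos Θ) * (M 1 0 * Real.cos Θ + M 1 1 * Real.sin Θ)) := by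
    simp [hθ', dot, nhat, ghat, vec2, mulVec2, hM]
  simp only [dot, nhat, vec2, mulVec2, WithLp.equiv_symm_apply, WithLp.ofLp_toLp,
    Matrix.cons_val_zero, Matrix.cons_val_one, Matrix.head_cons]
  rw [hθ'e, hv0, hv1]
  linear_combination ((u (r t) 0 + v₀ * Real.sin Θ) * (M 0 0 * Real.sin Θ - M 1 0 * Real.cos Θ)
      + (u (r t) 1 + v₀ * (-Real.cos Θ)) * (M 0 1 * Real.sin Θ - M 1 1 * Real.cos Θ)) *
    (Real.sin_sq_add_cos_sq Θ)
end
end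

section
/- Sliding is an invariant property along trajectories: let v₀ > 0, let u : ℝ² → ℝ² be continuously differentiable, and let (r, θ) : I → ℝ² × ℝ be a differentiable solution of the front-element dynamics on an open interval I. If at some time t₀ ∈ I the point (r(t₀), θ(t₀)) is sliding, i.e. (u(r(t₀)) + v₀ n̂(θ(t₀))) · n̂(θ(t₀)) = 0, then (r(t), θ(t)) is sliding for every t ∈ I. -/
noncomputable section

open Real Polynomial

private lemma slide_decomp (v : Pt) :
    v = v 0 • EuclideanSpace.single (0:Fin 2) (1:ℝ) + v 1 • EuclideanSpace.single 1 1 := by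
  ext i; fin_cases i <;> simp [EuclideanSpace.single_apply]

private lemma slide_clm_apply_eq (L : Pt →L[ℝ] Pt) (v : Pt) (i : Fin 2) :
    L v i = v 0 * L (EuclideanSpace.single 0 1) i + v 1 * L (EuclideanSpace.single 1 1) i := by
  conv_lhs => rw [slide_decomp v]
  simp

/-- Sliding is invariant along trajectories of the front-element
dynamics: if a solution is sliding at one time, it is sliding at every time. -/
theorem sliding_is_invariant
    (v₀ : ℝ) (hv₀ : 0 < v₀) (u : Pt → Pt) (hu : ContDiff ℝ 1 u)
    (a b : ℝ) (r : ℝ → Pt) (θ : ℝ → ℝ)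
    (hr : ∀ t ∈ Set.Ioo a b, HasDerivAt r (u (r t) + v₀ • nhat (θ t)) t)
    (hθ : ∀ t ∈ Set.Ioo a b,
      HasDerivAt θ (-(dot (nhat (θ t)) (mulVec2 (jacOf u (r t)) (ghat (θ t))))) t)
    (t₀ : ℝ) (ht₀ : t₀ ∈ Set.Ioo a b)
    (hslide₀ : dot (u (r t₀) + v₀ • nhat (θ t₀)) (nhat (θ t₀)) = 0) :
    ∀ t ∈ Set.Ioo a b, dot (u (r t) + v₀ • nhat (θ t)) (nhat (θ t)) = 0 := by
  set f : ℝ → ℝ := fun s => dot (u (r s) + v₀ • nhat (θ s)) (nhat (θ s)) with hf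
  set c : ℝ → ℝ := fun s => dot (nhat (θ s)) (mulVec2 (jacOf u (r s)) (nhat (θ s))) with hc
  have hderiv : ∀ s ∈ Set.Ioo a b, HasDerivAt f (c s * f s) s := by
    intro s hs
    have hrs := hr s hs
    have hθs := hθ s hs
    set V : Pt := u (r s) + v₀ • nhat (θ s) with hV
    set θ' : ℝ := -(dot (nhat (θ s)) (mulVec2 (jacOf u (r s)) (ghat (θ s)))) with hθ'
    have hsin : HasDerivAt (fun t => Real.sin (θ t)) (Real.cos (θ s) * θ') s :=
      (Real.hasDerivAt_sin (θ s)).comp s hθs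
    have hcos : HasDerivAt (fun t => Real.cos (θ t)) (-Real.sin (θ s) * θ') s :=
      (Real.hasDerivAt_cos (θ s)).comp s hθs
    have hur : HasDerivAt (fun t => u (r t)) (fderiv ℝ u (r s) V) s :=
      ((hu.differentiable one_ne_zero (r s)).hasFDerivAt).comp_hasDerivAt s hrs
    have hui : ∀ i : Fin 2, HasDerivAt (fun t => u (r t) i)
        (V 0 * jacOf u (r s) i 0 + V 1 * jacOf u (r s) i 1) s := by
      intro i
      have := (EuclideanSpace.proj (𝕜 := ℝ) i).hasFDerivAt.comp_hasDerivAt s hur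
      simpa [jacOf, slide_clm_apply_eq (fderiv ℝ u (r s)) V i, Function.comp_def] using this
    have h1 : HasDerivAt (fun t => (u (r t) 0 + v₀ * Real.sin (θ t)) * Real.sin (θ t)
          + (u (r t) 1 + v₀ * (-Real.cos (θ t))) * (-Real.cos (θ t)))
        (((V 0 * jacOf u (r s) 0 0 + V 1 * jacOf u (r s) 0 1) + v₀ * (Real.cos (θ s) * θ')) * Real.sin (θ s)
          + (u (r s) 0 + v₀ * Real.sin (θ s)) * (Real.cos (θ s) * θ')
          + ((((V 0 * jacOf u (r s) 1 0 + V 1 * jacOf u (r s) 1 1) + v₀ * (-(-Real.sin (θ s) * θ'))) * (-Real.cos (θ s)))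
          + (u (r s) 1 + v₀ * (-Real.cos (θ s))) * (-(-Real.sin (θ s) * θ')))) s :=
      (((hui 0).add (hsin.const_mul v₀)).mul hsin).add
        (((hui 1).add ((hcos.neg).const_mul v₀)).mul hcos.neg)
    have heqf : f = (fun t => (u (r t) 0 + v₀ * Real.sin (θ t)) * Real.sin (θ t)
          + (u (r t) 1 + v₀ * (-Real.cos (θ t))) * (-Real.cos (θ t))) := by
      funext t
      simp [hf, dot, nhat, vec2, PiLp.add_apply, PiLp.smul_apply, smul_eq_mul]
    rw [heqf]
    convert h1 using 1
    have hV0 : V 0 = u (r s) 0 + v₀ * Real.sin (θ s) := by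
      simp [hV, nhat, vec2, PiLp.add_apply, PiLp.smul_apply, smul_eq_mul]
    have hV1 : V 1 = u (r s) 1 + v₀ * (-Real.cos (θ s)) := by
      simp [hV, nhat, vec2, PiLp.add_apply, PiLp.smul_apply, smul_eq_mul]
    have hpy : Real.sin (θ s) ^ 2 + Real.cos (θ s) ^ 2 = 1 := Real.sin_sq_add_cos_sq (θ s)
    rw [hθ', hc]
    simp only [hV0, hV1, dot, mulVec2, nhat, ghat, vec2, WithLp.equiv_symm_apply, PiLp.toLp_apply,
      Matrix.cons_val_zero, Matrix.cons_val_one, Matrix.head_cons, PiLp.add_apply,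
      PiLp.smul_apply, smul_eq_mul]
    set S := Real.sin (θ s); set CO := Real.cos (θ s)
    set U0 := u (r s) 0; set U1 := u (r s) 1
    set a00 := jacOf u (r s) 0 0; set a01 := jacOf u (r s) 0 1
    set a10 := jacOf u (r s) 1 0; set a11 := jacOf u (r s) 1 1
    linear_combination (-1 : ℝ) * (CO*U1*a11 + CO*U0*a10 - CO^2*a11*v₀ - S*U1*a01 - S*U0*a00
      + S*CO*a10*v₀ + S*CO*a01*v₀ - S^2*a00*v₀) * hpy
  have hrc : ContinuousOn r (Set.Ioo a b) := fun s hs => ((hr s hs).continuousAt).continuousWithinAt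
  have hθc : ContinuousOn θ (Set.Ioo a b) := fun s hs => ((hθ s hs).continuousAt).continuousWithinAt
  have hJ : ∀ i j : Fin 2, ContinuousOn (fun s => jacOf u (r s) i j) (Set.Ioo a b) := by
    intro i j
    have h1 : Continuous (fun L : Pt →L[ℝ] Pt => L (EuclideanSpace.single j 1) i) :=
      ((EuclideanSpace.proj (𝕜 := ℝ) i).comp
        (ContinuousLinearMap.apply ℝ Pt (EuclideanSpace.single j 1))).continuous
    exact h1.comp_continuousOn ((hu.continuous_fderiv one_ne_zero).comp_continuousOn hrc)
  have hsinc : ContinuousOn (fun s => Real.sin (θ s)) (Set.Ioo a b) :=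
    Real.continuous_sin.comp_continuousOn hθc
  have hcosc : ContinuousOn (fun s => Real.cos (θ s)) (Set.Ioo a b) :=
    Real.continuous_cos.comp_continuousOn hθc
  have hcc : ContinuousOn c (Set.Ioo a b) := by
    have hceq : c = fun s => Real.sin (θ s) * (jacOf u (r s) 0 0 * Real.sin (θ s)
        + jacOf u (r s) 0 1 * (-Real.cos (θ s)))
        + (-Real.cos (θ s)) * (jacOf u (r s) 1 0 * Real.sin (θ s)
        + jacOf u (r s) 1 1 * (-Real.cos (θ s))) := by
      funext s
      simp [hc, dot, mulVec2, nhat, vec2]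
    rw [hceq]
    exact (hsinc.mul (((hJ 0 0).mul hsinc).add ((hJ 0 1).mul hcosc.neg))).add
      (hcosc.neg.mul (((hJ 1 0).mul hsinc).add ((hJ 1 1).mul hcosc.neg)))
  intro t ht
  have hsub : Set.Icc (min t₀ t) (max t₀ t) ⊆ Set.Ioo a b := by
    intro x hx
    exact ⟨lt_of_lt_of_le (lt_min ht₀.1 ht.1) hx.1, lt_of_le_of_lt hx.2 (max_lt ht₀.2 ht.2)⟩
  set C : ℝ → ℝ := fun y => ∫ z in t₀..y, c z with hCdef
  have hC : ∀ x ∈ Set.Ioo a b, HasDerivAt C (c x) x := by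
    intro x hx
    have hint : IntervalIntegrable c MeasureTheory.volume t₀ x :=
      (hcc.mono (Set.ordConnected_Ioo.uIcc_subset ht₀ hx)).intervalIntegrable
    exact intervalIntegral.integral_hasDerivAt_right hint
      (ContinuousOn.stronglyMeasurableAtFilter isOpen_Ioo hcc x hx)
      (hcc.continuousAt (Ioo_mem_nhds hx.1 hx.2))
  set g : ℝ → ℝ := fun y => f y * Real.exp (-(C y)) with hg
  have hgderiv : ∀ x ∈ Set.Ioo a b, HasDerivAt g 0 x := by
    intro x hx
    have h1 : HasDerivAt g (c x * f x * Real.exp (-(C x)) + f x * (Real.exp (-(C x)) * -c x)) x :=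
      (hderiv x hx).mul (((hC x hx).neg).exp)
    convert h1 using 1
    ring
  have hgc : ContinuousOn g (Set.Icc (min t₀ t) (max t₀ t)) :=
    fun x hx => ((hgderiv x (hsub hx)).continuousAt).continuousWithinAt
  have hconst := constant_of_has_deriv_right_zero hgc
    (fun x hx => (hgderiv x (hsub (Set.mem_Icc_of_Ico hx))).hasDerivWithinAt)
  have hf0 : f t₀ = 0 := hslide₀
  have h0 : g t₀ = 0 := by rw [hg]; simp only [hf0]; ring
  have ht2 : g t = g (min t₀ t) := hconst t ⟨min_le_right _ _, le_max_right _ _⟩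
  have ht02 : g t₀ = g (min t₀ t) := hconst t₀ ⟨min_le_left _ _, le_max_left _ _⟩
  have hgt : g t = 0 := by rw [ht2, ← ht02, h0]
  have hft : f t = 0 := by
    rcases mul_eq_zero.mp hgt with h | h
    · exact h
    · exact absurd h (Real.exp_ne_zero _)
  exact hft
end
end

section
/- Length of a cusp-free sliding front: let v₀ > 0, let Ψ : ℝ² → ℝ be continuously differentiable, let u = (∂Ψ/∂y, −∂Ψ/∂x), and let (r, θ) : [t₀, t₁] → ℝ² × ℝ be a differentiable solution of ṙ = u(r) + v₀ n̂(θ) that is sliding (ṙ · n̂(θ) = 0) and satisfies ṙ(t) · ĝ(θ(t)) > 0 for all t ∈ [t₀, t₁]. Then the arc length of the trajectory equals the drop in stream function divided by the burning speed: ∫_{t₀}^{t₁} |ṙ(t)| dt = (Ψ(r(t₀)) − Ψ(r(t₁)))/v₀. -/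
noncomputable section

open Real Polynomial

lemma pt_norm_eq (v : Pt) : ‖v‖ = Real.sqrt (v 0^2 + v 1^2) := by
  rw [EuclideanSpace.norm_eq]; simp [Fin.sum_univ_two, sq_abs]

lemma clm_apply_pt (L : Pt →L[ℝ] ℝ) (v : Pt) :
    L v = v 0 * L (EuclideanSpace.single 0 1) + v 1 * L (EuclideanSpace.single 1 1) := by
  have h : v = v 0 • EuclideanSpace.single (0:Fin 2) (1:ℝ) + v 1 • EuclideanSpace.single 1 1 := by
    ext i; fin_cases i <;> simp [EuclideanSpace.single_apply]
  conv_lhs => rw [h]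
  simp [mul_comm]

/-- Length of a cusp-free sliding front: for a sliding solution
with ṙ·ĝ > 0 on [t₀, t₁], the arc length equals the drop in stream function
divided by the burning speed. -/
theorem sliding_front_length
    (v₀ : ℝ) (hv₀ : 0 < v₀) (Ψ : Pt → ℝ) (hΨ : ContDiff ℝ 1 Ψ)
    (t₀ t₁ : ℝ) (ht : t₀ ≤ t₁) (r : ℝ → Pt) (θ : ℝ → ℝ)
    (hr : ∀ t ∈ Set.Icc t₀ t₁, HasDerivAt r (uOf Ψ (r t) + v₀ • nhat (θ t)) t)
    (hslide : ∀ t ∈ Set.Icc t₀ t₁,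
      dot (uOf Ψ (r t) + v₀ • nhat (θ t)) (nhat (θ t)) = 0)
    (hpos : ∀ t ∈ Set.Icc t₀ t₁,
      0 < dot (uOf Ψ (r t) + v₀ • nhat (θ t)) (ghat (θ t))) :
    ∫ t in t₀..t₁, ‖uOf Ψ (r t) + v₀ • nhat (θ t)‖ =
      (Ψ (r t₀) - Ψ (r t₁)) / v₀ := by
  set A : ℝ → ℝ := fun t => fderiv ℝ Ψ (r t) (EuclideanSpace.single 0 1) with hA
  set B : ℝ → ℝ := fun t => fderiv ℝ Ψ (r t) (EuclideanSpace.single 1 1) with hB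
  set φ : ℝ → ℝ := fun t => Real.sqrt (A t ^ 2 + B t ^ 2 - v₀ ^ 2) with hφ
  have e0 : ∀ t, (uOf Ψ (r t) + v₀ • nhat (θ t)) 0 = B t + v₀ * Real.sin (θ t) :=
    fun t => rfl
  have e1 : ∀ t, (uOf Ψ (r t) + v₀ • nhat (θ t)) 1 = -(A t) + v₀ * (-(Real.cos (θ t))) :=
    fun t => rfl
  -- sliding relation
  have hsl : ∀ t ∈ Set.Icc t₀ t₁,
      B t * Real.sin (θ t) + A t * Real.cos (θ t) + v₀ = 0 := by
    intro t htt
    have h := hslide t htt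
    have hpy := Real.sin_sq_add_cos_sq (θ t)
    simp only [dot] at h
    rw [e0, e1, show nhat (θ t) 0 = Real.sin (θ t) from rfl,
      show nhat (θ t) 1 = -(Real.cos (θ t)) from rfl] at h
    linear_combination h - v₀ * hpy
  -- positivity relation
  have hpo : ∀ t ∈ Set.Icc t₀ t₁, 0 < B t * Real.cos (θ t) - A t * Real.sin (θ t) := by
    intro t htt
    have h := hpos t htt
    simp only [dot] at h
    rw [e0, e1, show ghat (θ t) 0 = Real.cos (θ t) from rfl,
      show ghat (θ t) 1 = Real.sin (θ t) from rfl] at h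
    nlinarith [h]
  -- norm of the velocity
  have hnorm : ∀ t ∈ Set.Icc t₀ t₁, ‖uOf Ψ (r t) + v₀ • nhat (θ t)‖ = φ t := by
    intro t htt
    have hsl' := hsl t htt
    have hpy := Real.sin_sq_add_cos_sq (θ t)
    rw [pt_norm_eq, e0, e1, show φ t = Real.sqrt (A t ^ 2 + B t ^ 2 - v₀ ^ 2) from rfl]
    congr 1
    linear_combination 2 * v₀ * hsl' + v₀ ^ 2 * hpy
  -- the norm also equals the tangential component
  have hnorm' : ∀ t ∈ Set.Icc t₀ t₁, φ t = B t * Real.cos (θ t) - A t * Real.sin (θ t) := by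
    intro t htt
    have hsl' := hsl t htt
    have hpy := Real.sin_sq_add_cos_sq (θ t)
    have hpo' := hpo t htt
    have key : A t ^ 2 + B t ^ 2 - v₀ ^ 2
        = (B t * Real.cos (θ t) - A t * Real.sin (θ t)) ^ 2 := by
      linear_combination (-(A t ^ 2 + B t ^ 2)) * hpy +
        (B t * Real.sin (θ t) + A t * Real.cos (θ t) - v₀) * hsl'
    rw [show φ t = Real.sqrt (A t ^ 2 + B t ^ 2 - v₀ ^ 2) from rfl, key,
      Real.sqrt_sq hpo'.le]
  -- derivative of Ψ ∘ r
  have hderiv : ∀ t ∈ Set.uIcc t₀ t₁, HasDerivAt (fun s => Ψ (r s)) (-(v₀ * φ t)) t := by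
    rw [Set.uIcc_of_le ht]
    intro t htt
    have hd : HasDerivAt (fun s => Ψ (r s))
        (fderiv ℝ Ψ (r t) (uOf Ψ (r t) + v₀ • nhat (θ t))) t :=
      ((hΨ.differentiable one_ne_zero (r t)).hasFDerivAt).comp_hasDerivAt t (hr t htt)
    have heq : fderiv ℝ Ψ (r t) (uOf Ψ (r t) + v₀ • nhat (θ t)) = -(v₀ * φ t) := by
      rw [clm_apply_pt, e0, e1,
        show (fderiv ℝ Ψ (r t)) (EuclideanSpace.single 0 1) = A t from rfl,
        show (fderiv ℝ Ψ (r t)) (EuclideanSpace.single 1 1) = B t from rfl,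
        hnorm' t htt]
      ring
    rwa [heq] at hd
  -- continuity
  have hrc : ContinuousOn r (Set.Icc t₀ t₁) := fun t htt =>
    (hr t htt).continuousAt.continuousWithinAt
  have hfc : Continuous (fderiv ℝ Ψ) := hΨ.continuous_fderiv one_ne_zero
  have hAc : ContinuousOn A (Set.Icc t₀ t₁) :=
    (hfc.comp_continuousOn hrc).clm_apply continuousOn_const
  have hBc : ContinuousOn B (Set.Icc t₀ t₁) :=
    (hfc.comp_continuousOn hrc).clm_apply continuousOn_const
  have hφc : ContinuousOn φ (Set.Icc t₀ t₁) :=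
    (((hAc.pow 2).add (hBc.pow 2)).sub continuousOn_const).sqrt
  have hint : IntervalIntegrable (fun t => -(v₀ * φ t)) MeasureTheory.volume t₀ t₁ := by
    apply ContinuousOn.intervalIntegrable
    rw [Set.uIcc_of_le ht]
    exact (continuousOn_const.mul hφc).neg
  have hFTC := intervalIntegral.integral_eq_sub_of_hasDerivAt hderiv hint
  have hcong : (∫ t in t₀..t₁, ‖uOf Ψ (r t) + v₀ • nhat (θ t)‖) = ∫ t in t₀..t₁, φ t := by
    apply intervalIntegral.integral_congr
    rw [Set.uIcc_of_le ht]
    exact fun t htt => hnorm t htt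
  have hsplit : (∫ t in t₀..t₁, -(v₀ * φ t)) = -(v₀ * ∫ t in t₀..t₁, φ t) := by
    rw [intervalIntegral.integral_neg, intervalIntegral.integral_const_mul]
  rw [hsplit] at hFTC
  rw [hcong]
  field_simp
  linarith [hFTC]
end
end

section
/- Let v₀ > 0, μ > 0, and 2 < c ≤ 9/4, and define u : ℝ² → ℝ² by u(x, y) = (−v₀ − μx + (cμ²/(2v₀)) y², μy). Then all three eigenvalues of the Jacobian matrix at ((0,0), π/2) of the three-dimensional vector field F(r, θ) = (u(r) + v₀ n̂(θ), −n̂(θ)·(Du(r) ĝ(θ))) are real and negative; explicitly they are −μ and (1/2)(−μ ± μ√(9 − 4c)). In particular the equilibrium ((0,0), π/2) is a burning fixed point of stability type SSS with real eigenvalues. -/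
noncomputable section

open Real Polynomial

lemma hasFDerivAt_vec2 {E : Type*} [NormedAddCommGroup E] [NormedSpace ℝ E]
    {f g : E → ℝ} {f' g' : E →L[ℝ] ℝ} {x : E}
    (hf : HasFDerivAt f f' x) (hg : HasFDerivAt g g' x) :
    HasFDerivAt (fun y => vec2 (f y) (g y))
      (f'.smulRight (EuclideanSpace.single (0:Fin 2) (1:ℝ)) +
       g'.smulRight (EuclideanSpace.single (1:Fin 2) (1:ℝ))) x := by
  have h : (fun y => vec2 (f y) (g y)) =
      fun y => f y • EuclideanSpace.single (0:Fin 2) (1:ℝ) + g y • EuclideanSpace.single (1:Fin 2) (1:ℝ) := by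
    funext y; ext i; fin_cases i <;> simp [vec2, EuclideanSpace.single_apply]
  rw [h]; exact (hf.smul_const _).add (hg.smul_const _)

lemma hasFDerivAt_sq {E : Type*} [NormedAddCommGroup E] [NormedSpace ℝ E]
    {f : E → ℝ} {f' : E →L[ℝ] ℝ} {x : E} (hf : HasFDerivAt f f' x) :
    HasFDerivAt (fun y => f y ^ 2) ((2 * f x) • f') x := by
  simp only [pow_two]
  simpa [two_mul, add_smul] using hf.fun_mul hf


section
variable (v₀ μ k : ℝ)

lemma proj_hasFDerivAt' (i : Fin 2) (x : Pt) :
    HasFDerivAt (fun y : Pt => y i) (EuclideanSpace.proj (𝕜 := ℝ) i : Pt →L[ℝ] ℝ) x :=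
  (EuclideanSpace.proj (𝕜 := ℝ) i).hasFDerivAt

lemma hu (r : Pt) :
    HasFDerivAt (fun x : Pt => vec2 (-v₀ - μ * x 0 + k * (x 1) ^ 2) (μ * x 1))
      (((μ • -(EuclideanSpace.proj (𝕜 := ℝ) (0:Fin 2)) + (2 * k * r 1) • EuclideanSpace.proj 1).smulRight
          (EuclideanSpace.single (0:Fin 2) (1:ℝ))) +
       ((μ • EuclideanSpace.proj (𝕜 := ℝ) (1:Fin 2)).smulRight (EuclideanSpace.single (1:Fin 2) (1:ℝ)))) r := by
  have h0 := proj_hasFDerivAt' 0 r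
  have h1 := proj_hasFDerivAt' 1 r
  have hf : HasFDerivAt (fun x : Pt => -v₀ - μ * x 0 + k * (x 1) ^ 2)
      (μ • -(EuclideanSpace.proj (𝕜 := ℝ) (0:Fin 2)) + (2 * k * r 1) • EuclideanSpace.proj 1) r := by
    have := ((hasFDerivAt_const (-v₀) r).sub (h0.const_mul μ)).add ((hasFDerivAt_sq h1).const_mul k)
    refine this.congr_fderiv ?_
    ext v
    simp only [ContinuousLinearMap.add_apply, ContinuousLinearMap.sub_apply,
      ContinuousLinearMap.smul_apply, ContinuousLinearMap.neg_apply,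
      ContinuousLinearMap.zero_apply, smul_eq_mul]
    ring
  have hg : HasFDerivAt (fun x : Pt => μ * x 1)
      (μ • EuclideanSpace.proj (𝕜 := ℝ) (1:Fin 2)) r := h1.const_mul μ
  exact hasFDerivAt_vec2 hf hg

lemma jac_explicit (r : Pt) :
    jacOf (fun x : Pt => vec2 (-v₀ - μ * x 0 + k * (x 1) ^ 2) (μ * x 1)) r =
      !![-μ, 2 * k * r 1; 0, μ] := by
  funext i j
  have := (hu v₀ μ k r).fderiv
  simp only [jacOf, this]
  fin_cases i <;> fin_cases j <;>
    simp [vec2, EuclideanSpace.single_apply, ContinuousLinearMap.smulRight_apply]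
end


section
variable (v₀ μ k : ℝ)

lemma hFF :
    frontField v₀ (fun x : Pt => vec2 (-v₀ - μ * x 0 + k * (x 1) ^ 2) (μ * x 1)) =
      fun q : Pt × ℝ =>
        (vec2 (-v₀ - μ * q.1 0 + k * (q.1 1) ^ 2 + v₀ * Real.sin q.2)
              (μ * q.1 1 - v₀ * Real.cos q.2),
         2 * μ * Real.sin q.2 * Real.cos q.2 - 2 * k * q.1 1 * (Real.sin q.2) ^ 2) := by
  funext q
  simp only [frontField, jac_explicit]
  refine Prod.ext ?_ ?_
  · ext i; fin_cases i <;>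
      simp [vec2, nhat, PiLp.add_apply, PiLp.smul_apply, smul_eq_mul] <;> ring
  · simp [dot, mulVec2, nhat, ghat, vec2, Matrix.cons_val_zero, Matrix.cons_val_one]
    ring
end

section
variable (v₀ μ k : ℝ)

def PP (i : Fin 2) : (Pt × ℝ) →L[ℝ] ℝ :=
  (EuclideanSpace.proj (𝕜 := ℝ) i).comp (ContinuousLinearMap.fst ℝ Pt ℝ)
def SS : (Pt × ℝ) →L[ℝ] ℝ := ContinuousLinearMap.snd ℝ Pt ℝ

lemma PP_hasFDerivAt (i : Fin 2) (q : Pt × ℝ) :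
    HasFDerivAt (fun q : Pt × ℝ => q.1 i) (PP i) q := (PP i).hasFDerivAt
lemma SS_hasFDerivAt (q : Pt × ℝ) :
    HasFDerivAt (fun q : Pt × ℝ => q.2) SS q := SS.hasFDerivAt

lemma sin_snd_hasFDerivAt (q : Pt × ℝ) :
    HasFDerivAt (fun q : Pt × ℝ => Real.sin q.2) (Real.cos q.2 • SS) q :=
  (Real.hasDerivAt_sin q.2).comp_hasFDerivAt q (SS_hasFDerivAt q)
lemma cos_snd_hasFDerivAt (q : Pt × ℝ) :
    HasFDerivAt (fun q : Pt × ℝ => Real.cos q.2) ((-Real.sin q.2) • SS) q :=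
  (Real.hasDerivAt_cos q.2).comp_hasFDerivAt q (SS_hasFDerivAt q)

lemma hG (q : Pt × ℝ) :
    HasFDerivAt (fun q : Pt × ℝ =>
        (vec2 (-v₀ - μ * q.1 0 + k * (q.1 1) ^ 2 + v₀ * Real.sin q.2)
              (μ * q.1 1 - v₀ * Real.cos q.2),
         2 * μ * Real.sin q.2 * Real.cos q.2 - 2 * k * q.1 1 * (Real.sin q.2) ^ 2))
      ((((μ • -(PP 0)) + (2 * k * q.1 1) • PP 1 + (v₀ * Real.cos q.2) • SS).smulRight

            (EuclideanSpace.single (0:Fin 2) (1:ℝ)) +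
         (μ • PP 1 + (v₀ * Real.sin q.2) • SS).smulRight
            (EuclideanSpace.single (1:Fin 2) (1:ℝ))).prod
        ((-(2 * k * (Real.sin q.2) ^ 2)) • PP 1 +
         (2 * μ * ((Real.cos q.2) ^ 2 - (Real.sin q.2) ^ 2)
           - 4 * k * q.1 1 * Real.sin q.2 * Real.cos q.2) • SS)) q := by
  have h0 := PP_hasFDerivAt 0 q
  have h1 := PP_hasFDerivAt 1 q
  have hs := sin_snd_hasFDerivAt q
  have hc := cos_snd_hasFDerivAt q
  have hf₁ : HasFDerivAt (fun q : Pt × ℝ => -v₀ - μ * q.1 0 + k * (q.1 1) ^ 2 + v₀ * Real.sin q.2)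
      (μ • -(PP 0) + (2 * k * q.1 1) • PP 1 + (v₀ * Real.cos q.2) • SS) q := by
    refine ((((hasFDerivAt_const (-v₀) q).sub (h0.const_mul μ)).add
      ((hasFDerivAt_sq h1).const_mul k)).add (hs.const_mul v₀)).congr_fderiv ?_
    ext v
    all_goals simp only [ContinuousLinearMap.coe_comp', Function.comp_apply,
      ContinuousLinearMap.inl_apply, ContinuousLinearMap.inr_apply,
      ContinuousLinearMap.add_apply, ContinuousLinearMap.sub_apply,
      ContinuousLinearMap.smul_apply, ContinuousLinearMap.neg_apply,
      ContinuousLinearMap.zero_apply, smul_eq_mul, PP, SS,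
      ContinuousLinearMap.coe_fst', ContinuousLinearMap.coe_snd',
      PiLp.proj_apply]
    all_goals ring
  have hf₂ : HasFDerivAt (fun q : Pt × ℝ => μ * q.1 1 - v₀ * Real.cos q.2)
      (μ • PP 1 + (v₀ * Real.sin q.2) • SS) q := by
    refine ((h1.const_mul μ).sub (hc.const_mul v₀)).congr_fderiv ?_
    ext v
    all_goals simp only [ContinuousLinearMap.coe_comp', Function.comp_apply,
      ContinuousLinearMap.inl_apply, ContinuousLinearMap.inr_apply,
      ContinuousLinearMap.add_apply, ContinuousLinearMap.sub_apply,
      ContinuousLinearMap.smul_apply, ContinuousLinearMap.neg_apply,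
      ContinuousLinearMap.zero_apply, smul_eq_mul, PP, SS,
      ContinuousLinearMap.coe_fst', ContinuousLinearMap.coe_snd',
      PiLp.proj_apply]
    all_goals ring
  have hg₂ : HasFDerivAt (fun q : Pt × ℝ =>
        2 * μ * Real.sin q.2 * Real.cos q.2 - 2 * k * q.1 1 * (Real.sin q.2) ^ 2)
      ((-(2 * k * (Real.sin q.2) ^ 2)) • PP 1 +
       (2 * μ * ((Real.cos q.2) ^ 2 - (Real.sin q.2) ^ 2)
         - 4 * k * q.1 1 * Real.sin q.2 * Real.cos q.2) • SS) q := by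
    refine ((((hs.const_mul (2 * μ)).mul hc)).sub
      ((h1.const_mul (2 * k)).mul (hasFDerivAt_sq hs))).congr_fderiv ?_
    ext v
    all_goals simp only [ContinuousLinearMap.coe_comp', Function.comp_apply,
      ContinuousLinearMap.inl_apply, ContinuousLinearMap.inr_apply,
      ContinuousLinearMap.add_apply, ContinuousLinearMap.sub_apply,
      ContinuousLinearMap.smul_apply, ContinuousLinearMap.neg_apply,
      ContinuousLinearMap.zero_apply, smul_eq_mul, PP, SS,
      ContinuousLinearMap.coe_fst', ContinuousLinearMap.coe_snd',
      PiLp.proj_apply]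
    all_goals ring
  exact (hasFDerivAt_vec2 hf₁ hf₂).prodMk hg₂
end

section
variable (v₀ μ k : ℝ)

set_option maxHeartbeats 1000000 in
lemma jac3_explicit :
    jac3 v₀ (fun x : Pt => vec2 (-v₀ - μ * x 0 + k * (x 1) ^ 2) (μ * x 1)) ((0 : Pt), π / 2) =
      !![-μ, 0, 0; 0, μ, v₀; 0, -(2 * k), -(2 * μ)] := by
  funext i j
  have hd := (hG v₀ μ k ((0 : Pt), π / 2)).fderiv
  have h0 : ((0 : Pt), π / 2).1 1 = 0 := rfl
  have h0' : (0 : Pt) 1 = 0 := rfl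
  simp only [h0, h0', Real.sin_pi_div_two, Real.cos_pi_div_two, mul_zero, zero_mul, mul_one,
    one_pow, zero_smul, smul_zero, add_zero, zero_add, mul_zero] at hd
  norm_num at hd
  simp only [jac3, hFF, hd]
  fin_cases i <;> fin_cases j <;>
    simp [comp3, basis3, vec2, PP, SS, Real.sin_pi_div_two, Real.cos_pi_div_two,
      EuclideanSpace.single_apply, ContinuousLinearMap.smulRight_apply,
      ContinuousLinearMap.coe_comp', Function.comp_apply, PiLp.proj_apply,
      ContinuousLinearMap.coe_fst', ContinuousLinearMap.coe_snd',
      ContinuousLinearMap.prod_apply, PiLp.add_apply, PiLp.smul_apply, smul_eq_mul,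
      Matrix.vecHead, Matrix.vecTail]
end

lemma charpoly_eq (v₀ μ k r₁ r₂ : ℝ) (hsum : r₁ + r₂ = -μ)
    (hprod : r₁ * r₂ = 2 * k * v₀ - 2 * μ ^ 2) :
    (!![-μ, 0, 0; 0, μ, v₀; 0, -(2 * k), -(2 * μ)] : Matrix (Fin 3) (Fin 3) ℝ).charpoly =
      (X - C (-μ)) * ((X - C r₁) * (X - C r₂)) := by
  have e1 : (C r₁ : ℝ[X]) * C r₂ = 2 * C k * C v₀ - 2 * C μ ^ 2 := by
    rw [← C_mul, hprod]
    simp [map_sub, map_mul, map_pow, map_ofNat]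
  have e2 : (C r₁ : ℝ[X]) + C r₂ = -C μ := by rw [← C_add, hsum, map_neg]
  unfold Matrix.charpoly
  rw [Matrix.det_fin_three]
  simp [Matrix.charmatrix_apply, Matrix.diagonal_apply, map_neg, map_mul, map_ofNat,
    map_sub, map_pow, Matrix.vecHead, Matrix.vecTail]
  linear_combination (X + C μ) * X * e2 - (X + C μ) * e1

lemma roots_cubic (a b d : ℝ) :
    (((X - C a) * ((X - C b) * (X - C d))).map (algebraMap ℝ ℂ)).roots =
      {(a : ℂ), (b : ℂ), (d : ℂ)} := by
  have hmap : ((X - C a) * ((X - C b) * (X - C d))).map (algebraMap ℝ ℂ) =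
      (X - C (a : ℂ)) * ((X - C (b : ℂ)) * (X - C (d : ℂ))) := by
    simp [Polynomial.map_mul, Polynomial.map_sub]
  rw [hmap]
  rw [Polynomial.roots_mul (mul_ne_zero (X_sub_C_ne_zero (a:ℂ))
      (mul_ne_zero (X_sub_C_ne_zero (b:ℂ)) (X_sub_C_ne_zero (d:ℂ)))),
    Polynomial.roots_mul (mul_ne_zero (X_sub_C_ne_zero (b:ℂ)) (X_sub_C_ne_zero (d:ℂ))),
    roots_X_sub_C, roots_X_sub_C, roots_X_sub_C]
  rfl


/-- For the explicit flow with μ > 0 and 2 < c ≤ 9/4, the three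
eigenvalues of the Jacobian of the front-element field at ((0,0), π/2) are the
real negative numbers −μ and (1/2)(−μ ± μ√(9 − 4c)); in particular the
equilibrium is a burning fixed point of stability type SSS. -/
theorem sss_example_eigenvalues
    (v₀ μ c : ℝ) (hv₀ : 0 < v₀) (hμ : 0 < μ) (hc1 : 2 < c) (hc2 : c ≤ 9 / 4) :
    let u : Pt → Pt := fun x =>
      vec2 (-v₀ - μ * x 0 + (c * μ ^ 2 / (2 * v₀)) * (x 1) ^ 2) (μ * x 1)
    (((jac3 v₀ u ((0 : Pt), π / 2)).charpoly).map (algebraMap ℝ ℂ)).roots =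
      {((-μ : ℝ) : ℂ),
       (((-μ + μ * Real.sqrt (9 - 4 * c)) / 2 : ℝ) : ℂ),
       (((-μ - μ * Real.sqrt (9 - 4 * c)) / 2 : ℝ) : ℂ)} ∧
    (∀ z ∈ (((jac3 v₀ u ((0 : Pt), π / 2)).charpoly).map (algebraMap ℝ ℂ)).roots,
      z.re < 0) := by
  intro u
  set k : ℝ := c * μ ^ 2 / (2 * v₀) with hk
  set s : ℝ := Real.sqrt (9 - 4 * c) with hsdef
  have hs0 : 0 ≤ s := Real.sqrt_nonneg _
  have hs2 : s ^ 2 = 9 - 4 * c := Real.sq_sqrt (by linarith)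
  have hkv : 2 * k * v₀ = c * μ ^ 2 := by
    rw [hk]; field_simp
  have hsum : (-μ + μ * s) / 2 + (-μ - μ * s) / 2 = -μ := by ring
  have hprod : ((-μ + μ * s) / 2) * ((-μ - μ * s) / 2) = 2 * k * v₀ - 2 * μ ^ 2 := by
    rw [hkv]; linear_combination (-(μ^2)/4) * hs2
  have hM : jac3 v₀ u ((0 : Pt), π / 2) = !![-μ, 0, 0; 0, μ, v₀; 0, -(2 * k), -(2 * μ)] :=
    jac3_explicit v₀ μ k
  have hroots : (((jac3 v₀ u ((0 : Pt), π / 2)).charpoly).map (algebraMap ℝ ℂ)).roots =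
      {((-μ : ℝ) : ℂ), (((-μ + μ * s) / 2 : ℝ) : ℂ), (((-μ - μ * s) / 2 : ℝ) : ℂ)} := by
    rw [hM, charpoly_eq v₀ μ k _ _ hsum hprod, roots_cubic]
  refine ⟨hroots, ?_⟩
  intro z hz
  rw [hroots] at hz
  have h1 : s < 1 := by nlinarith
  simp only [Multiset.insert_eq_cons, Multiset.mem_cons, Multiset.mem_singleton] at hz
  rcases hz with h | h | h <;> subst h <;> simp [Complex.ofReal_re] <;> nlinarith
end
end
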